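/- Let $d,q$ be positive integers and let $x_1\ge\cdots\ge x_d>0$ be real numbers such that $\prod_{i=1}^l x_i \le 1 - q\sum_{i=1}^l x_i$ for every $1\le l\le d$. Then $\sum_{i=1}^d x_i \le \sum_{i=1}^d \frac{1}{1+u_{i,q}}$, where $u_{1,q}=q$ and $u_{p+1,q}=u_{p,q}(1+u_{p,q})$. -/

import Mathlib

open Finset Real

lemma prod_maj (b c : ℕ → ℝ) (l : ℕ)
    (hbpos : ∀ i, 1 ≤ i → i ≤ l → 0 < b i)
    (hcpos : ∀ i, 1 ≤ i → i ≤ l → 0 < c i)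
    (hbmono : ∀ i j, 1 ≤ i → i ≤ j → j ≤ l → b j ≤ b i)
    (htail : ∀ j, j ≤ l → 0 ≤ ∑ i ∈ Finset.Ioc j l, (b i - c i)) :
    ∏ i ∈ Finset.Ioc 0 l, c i ≤ ∏ i ∈ Finset.Ioc 0 l, b i := by
  rcases Nat.eq_zero_or_pos l with hl | hl
  · subst hl; simp
  -- Abel-type bound
  have step : ∀ k j, j + k = l →
      (∑ i ∈ Finset.Ioc j l, (b i - c i)) / b (j+1)
        ≤ ∑ i ∈ Finset.Ioc j l, (b i - c i) / b i := by
    intro k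
    induction k with
    | zero =>
      intro j hj
      have : Finset.Ioc j l = ∅ := by
        rw [Finset.Ioc_eq_empty_iff]; omega
      simp [this]
    | succ k IH =>
      intro j hj
      have hjl : j < l := by omega
      have hsplit : Finset.Ioc j l = insert (j+1) (Finset.Ioc (j+1) l) := by
        ext i; simp only [Finset.mem_Ioc, Finset.mem_insert]; omega
      have hnot : j + 1 ∉ Finset.Ioc (j+1) l := by simp
      have hb1 : 0 < b (j+1) := hbpos _ (by omega) (by omega)
      have hD : 0 ≤ ∑ i ∈ Finset.Ioc (j+1) l, (b i - c i) := htail _ (by omega)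
      have IH' := IH (j+1) (by omega)
      have hmid : (∑ i ∈ Finset.Ioc (j+1) l, (b i - c i)) / b (j+1)
          ≤ (∑ i ∈ Finset.Ioc (j+1) l, (b i - c i)) / b (j+2) := by
        rcases Nat.eq_zero_or_pos k with hk | hk
        · have : Finset.Ioc (j+1) l = ∅ := by
            rw [Finset.Ioc_eq_empty_iff]; omega
          simp [this]
        · have hb2 : 0 < b (j+2) := hbpos _ (by omega) (by omega)
          have hle : b (j+2) ≤ b (j+1) := hbmono _ _ (by omega) (by omega) (by omega)
          gcongr
      rw [hsplit, Finset.sum_insert hnot, Finset.sum_insert hnot, add_div]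
      have := le_trans hmid IH'
      linarith
  -- sum of logs
  have hlog : ∑ i ∈ Finset.Ioc 0 l, Real.log (c i) ≤ ∑ i ∈ Finset.Ioc 0 l, Real.log (b i) := by
    have h0 : 0 ≤ ∑ i ∈ Finset.Ioc 0 l, (b i - c i) / b i := by
      have := step l 0 (by omega)
      have hD0 : 0 ≤ ∑ i ∈ Finset.Ioc 0 l, (b i - c i) := htail 0 (by omega)
      have hb1 : 0 < b 1 := hbpos _ le_rfl hl
      calc (0:ℝ) ≤ (∑ i ∈ Finset.Ioc 0 l, (b i - c i)) / b 1 := by positivity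
        _ ≤ _ := this
    have hterm : ∀ i ∈ Finset.Ioc 0 l, (b i - c i) / b i ≤ Real.log (b i) - Real.log (c i) := by
      intro i hi
      simp only [Finset.mem_Ioc] at hi
      have hbi := hbpos i hi.1 hi.2
      have hci := hcpos i hi.1 hi.2
      have h1 : Real.log (c i / b i) ≤ c i / b i - 1 :=
        Real.log_le_sub_one_of_pos (by positivity)
      rw [Real.log_div (ne_of_gt hci) (ne_of_gt hbi)] at h1
      have : c i / b i - 1 = (c i - b i) / b i := by field_simp
      rw [this] at h1
      have : (b i - c i) / b i = -((c i - b i)/ b i) := by ring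
      rw [this]; linarith
    have := Finset.sum_le_sum hterm
    rw [Finset.sum_sub_distrib] at this
    linarith
  -- exponentiate
  have hc : ∏ i ∈ Finset.Ioc 0 l, c i = Real.exp (∑ i ∈ Finset.Ioc 0 l, Real.log (c i)) := by
    rw [Real.exp_sum]
    exact (Finset.prod_congr rfl fun i hi => by
      simp only [Finset.mem_Ioc] at hi
      exact (Real.exp_log (hcpos i hi.1 hi.2)).symm)
  have hb : ∏ i ∈ Finset.Ioc 0 l, b i = Real.exp (∑ i ∈ Finset.Ioc 0 l, Real.log (b i)) := by
    rw [Real.exp_sum]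
    exact (Finset.prod_congr rfl fun i hi => by
      simp only [Finset.mem_Ioc] at hi
      exact (Real.exp_log (hbpos i hi.1 hi.2)).symm)
  rw [hc, hb]
  exact Real.exp_le_exp.mpr hlog


theorem stmt_8 (d q : ℕ) (hd : 1 ≤ d) (hq : 1 ≤ q) (u : ℕ → ℕ)
    (hu1 : u 1 = q) (hurec : ∀ p ≥ 1, u (p + 1) = u p * (1 + u p))
    (x : ℕ → ℝ)
    (hxpos : ∀ i, 1 ≤ i → i ≤ d → 0 < x i)
    (hxmono : ∀ i j, 1 ≤ i → i ≤ j → j ≤ d → x j ≤ x i)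
    (hconstr : ∀ l, 1 ≤ l → l ≤ d →
      ∏ i ∈ Finset.Icc 1 l, x i ≤ 1 - q * ∑ i ∈ Finset.Icc 1 l, x i) :
    ∑ i ∈ Finset.Icc 1 d, x i ≤ ∑ i ∈ Finset.Icc 1 d, (1 : ℝ) / (1 + u i) := by
  set a : ℕ → ℝ := fun i => (1 : ℝ) / (1 + (u i : ℝ)) with ha_def
  have hIccIoc : ∀ l : ℕ, Finset.Icc 1 l = Finset.Ioc 0 l := by
    intro l; ext i; simp [Finset.mem_Icc, Finset.mem_Ioc]; omega
  -- basic facts on u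
  have hu_ge : ∀ p, 1 ≤ p → 1 ≤ u p := by
    intro p hp
    induction p, hp using Nat.le_induction with
    | base => omega
    | succ n hn IH =>
      rw [hurec n hn]
      have := IH
      nlinarith
  have hu_mono : ∀ i j, 1 ≤ i → i ≤ j → u i ≤ u j := by
    intro i j h1 hij
    induction j, hij using Nat.le_induction with
    | base => rfl
    | succ n hn IH =>
      rw [hurec n (by omega)]
      nlinarith [hu_ge n (by omega), IH]
  have hupos : ∀ p, 1 ≤ p → (0:ℝ) < (u p : ℝ) := by
    intro p hp; exact_mod_cast Nat.lt_of_lt_of_le Nat.zero_lt_one (hu_ge p hp)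
  have hqpos : (0:ℝ) < (q:ℝ) := by exact_mod_cast hq
  have hapos : ∀ i, 1 ≤ i → 0 < a i := by
    intro i hi
    have := hupos i hi
    simp only [ha_def]
    positivity
  have hamono : ∀ i j, 1 ≤ i → i ≤ j → a j ≤ a i := by
    intro i j h1 hij
    have h2 : (u i : ℝ) ≤ (u j : ℝ) := by exact_mod_cast hu_mono i j h1 hij
    have := hupos i h1
    simp only [ha_def]
    apply one_div_le_one_div_of_le (by linarith) (by linarith)
  -- telescoping sum
  have hA : ∀ l, 1 ≤ l → ∑ i ∈ Finset.Ioc 0 l, a i = 1/(q:ℝ) - 1/(u (l+1) : ℝ) := by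
    intro l hl
    induction l, hl using Nat.le_induction with
    | base =>
      have h2 : u 2 = q * (1 + q) := by
        have := hurec 1 le_rfl; rw [hu1] at this; simpa using this
      have : Finset.Ioc 0 1 = {1} := rfl
      rw [this, Finset.sum_singleton]
      simp only [ha_def, hu1, h2]
      have hq1 : (0:ℝ) < 1 + (q:ℝ) := by linarith
      push_cast
      field_simp
      ring
    | succ n hn IH =>
      rw [Finset.sum_Ioc_succ_top (by omega : 0 ≤ n), IH]
      have hrec : (u (n+2) : ℝ) = (u (n+1) : ℝ) * (1 + (u (n+1) : ℝ)) := by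
        have := hurec (n+1) (by omega); push_cast [this]; ring
      have h1 := hupos (n+1) (by omega)
      have h2 : (0:ℝ) < 1 + (u (n+1) : ℝ) := by linarith
      simp only [ha_def]
      rw [hrec]
      field_simp
      ring
  have hP : ∀ l, 1 ≤ l → ∏ i ∈ Finset.Ioc 0 l, a i = (q:ℝ)/(u (l+1) : ℝ) := by
    intro l hl
    induction l, hl using Nat.le_induction with
    | base =>
      have h2 : u 2 = q * (1 + q) := by
        have := hurec 1 le_rfl; rw [hu1] at this; simpa using this
      have : Finset.Ioc 0 1 = {1} := rfl
      rw [this, Finset.prod_singleton]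
      simp only [ha_def, hu1, h2]
      have hq1 : (0:ℝ) < 1 + (q:ℝ) := by linarith
      push_cast
      field_simp
    | succ n hn IH =>
      rw [Finset.prod_Ioc_succ_top (by omega : 0 ≤ n), IH]
      have hrec : (u (n+2) : ℝ) = (u (n+1) : ℝ) * (1 + (u (n+1) : ℝ)) := by
        have := hurec (n+1) (by omega); push_cast [this]; ring
      have h1 := hupos (n+1) (by omega)
      have h2 : (0:ℝ) < 1 + (u (n+1) : ℝ) := by linarith
      simp only [ha_def]
      rw [hrec]
      field_simp
  -- rewrite constraints in Ioc form
  have hconstr' : ∀ l, 1 ≤ l → l ≤ d →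
      ∏ i ∈ Finset.Ioc 0 l, x i ≤ 1 - q * ∑ i ∈ Finset.Ioc 0 l, x i := by
    intro l h1 h2
    have := hconstr l h1 h2
    rwa [hIccIoc] at this
  -- main claim
  have key : ∀ l, 1 ≤ l → l ≤ d →
      ∑ i ∈ Finset.Ioc 0 l, x i ≤ ∑ i ∈ Finset.Ioc 0 l, a i := by
    intro l
    induction l using Nat.strong_induction_on with
    | _ l IH =>
      intro h1 hld
      rcases Nat.lt_or_ge l 2 with hl2 | hl2
      · -- base case l = 1
        have hl1 : l = 1 := by omega
        subst hl1
        have hc := hconstr' 1 le_rfl hld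
        have : Finset.Ioc 0 1 = {1} := rfl
        rw [this, Finset.prod_singleton, Finset.sum_singleton] at hc
        rw [this, Finset.sum_singleton, Finset.sum_singleton]
        simp only [ha_def, hu1]
        rw [le_div_iff₀ (by positivity)]
        nlinarith
      · -- inductive step, l = m+1, m ≥ 1
        obtain ⟨m, rfl⟩ : ∃ m, l = m + 1 := ⟨l - 1, by omega⟩
        have hm1 : 1 ≤ m := by omega
        by_contra hcon
        push_neg at hcon
        set l := m + 1 with hl_def
        set S : ℕ → ℝ := fun j => ∑ i ∈ Finset.Ioc 0 j, x i with hS_def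
        set A : ℕ → ℝ := fun j => ∑ i ∈ Finset.Ioc 0 j, a i with hA_def
        have hSm : S m ≤ A m := IH m (by omega) hm1 (by omega)
        have hSl : S l = S m + x l := by
          simp only [hS_def]
          rw [Finset.sum_Ioc_succ_top (by omega : 0 ≤ m)]
        have hAl : A l = A m + a l := by
          simp only [hA_def]
          rw [Finset.sum_Ioc_succ_top (by omega : 0 ≤ m)]
        set β : ℝ := A l - S m with hβ_def
        have hβlt : β < x l := by
          have : A l < S l := hcon
          rw [hSl] at this; simp only [hβ_def]; linarith
        have hβge : a l ≤ β := by simp only [hβ_def]; rw [hAl]; linarith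
        have hal_pos : 0 < a l := hapos l (by omega)
        have hβpos : 0 < β := lt_of_lt_of_le hal_pos hβge
        set b : ℕ → ℝ := fun i => if i = l then β else x i with hb_def
        have hxl_pos : 0 < x l := hxpos l (by omega) hld
        -- product lemma hypotheses
        have hbpos : ∀ i, 1 ≤ i → i ≤ l → 0 < b i := by
          intro i hi1 hi2
          simp only [hb_def]
          by_cases h : i = l
          · simp [h, hβpos]
          · simp [h]; exact hxpos i hi1 (by omega)
        have hbmono : ∀ i j, 1 ≤ i → i ≤ j → j ≤ l → b j ≤ b i := by
          intro i j hi1 hij hjl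
          simp only [hb_def]
          by_cases hj : j = l
          · by_cases hi : i = l
            · simp [hi, hj]
            · simp [hi, hj]
              have : x l ≤ x i := hxmono i l hi1 (by omega) hld
              linarith
          · have hi : i ≠ l := by omega
            simp [hi, hj]
            exact hxmono i j hi1 hij (by omega)
        have htail : ∀ j, j ≤ l → 0 ≤ ∑ i ∈ Finset.Ioc j l, (b i - a i) := by
          intro j hjl
          rcases Nat.eq_or_lt_of_le hjl with h | h
          · subst h; simp
          · -- j < l, so j ≤ m
            have hjm : j ≤ m := by omega
            have hsplitb : ∑ i ∈ Finset.Ioc j l, b i = (∑ i ∈ Finset.Ioc j m, x i) + β := by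
              rw [Finset.sum_Ioc_succ_top hjm]
              congr 1
              · exact Finset.sum_congr rfl fun i hi => by
                  simp only [Finset.mem_Ioc] at hi
                  simp only [hb_def]
                  rw [if_neg (by omega)]
              · simp [hb_def, hl_def]
            have hsx : (∑ i ∈ Finset.Ioc j m, x i) = S m - S j := by
              simp only [hS_def]
              have := Finset.sum_Ioc_consecutive x (by omega : 0 ≤ j) hjm
              linarith
            have hsa : (∑ i ∈ Finset.Ioc j l, a i) = A l - A j := by
              simp only [hA_def]
              have := Finset.sum_Ioc_consecutive a (by omega : 0 ≤ j) (by omega : j ≤ l)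
              linarith
            have hSjAj : S j ≤ A j := by
              rcases Nat.eq_zero_or_pos j with hj0 | hj0
              · subst hj0; simp [hS_def, hA_def]
              · exact IH j (by omega) hj0 (by omega)
            rw [Finset.sum_sub_distrib, hsplitb, hsx, hsa]
            simp only [hβ_def]
            linarith
        have hprodmaj := prod_maj b a l hbpos (fun i hi _ => hapos i hi) hbmono htail
        -- compute both sides
        have hprodb : ∏ i ∈ Finset.Ioc 0 l, b i = (∏ i ∈ Finset.Ioc 0 m, x i) * β := by
          rw [Finset.prod_Ioc_succ_top (by omega : 0 ≤ m)]
          congr 1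
          · exact Finset.prod_congr rfl fun i hi => by
              simp only [Finset.mem_Ioc] at hi
              simp only [hb_def]
              rw [if_neg (by omega)]
          · simp [hb_def, hl_def]
        have hproda : ∏ i ∈ Finset.Ioc 0 l, a i = 1 - q * A l := by
          rw [hP l (by omega)]
          simp only [hA_def]
          rw [hA l (by omega)]
          have := hupos (l+1) (by omega)
          field_simp
          ring
        have hPm_pos : 0 < ∏ i ∈ Finset.Ioc 0 m, x i :=
          Finset.prod_pos fun i hi => by
            simp only [Finset.mem_Ioc] at hi
            exact hxpos i hi.1 (by omega)
        have hcl := hconstr' l (by omega) hld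
        have hcl' : (∏ i ∈ Finset.Ioc 0 m, x i) * x l ≤ 1 - q * S m - q * x l := by
          rw [Finset.prod_Ioc_succ_top (by omega : 0 ≤ m)] at hcl
          rw [hSl] at *
          have : (q:ℝ) * (S m + x l) = q * S m + q * x l := by ring
          simp only [hS_def] at hcl ⊢
          rw [Finset.sum_Ioc_succ_top (by omega : 0 ≤ m)] at hcl
          linarith
        -- contradiction
        have h1 : (∏ i ∈ Finset.Ioc 0 m, x i) * β + q * β < (∏ i ∈ Finset.Ioc 0 m, x i) * x l + q * x l := by
          nlinarith
        have h2 : (∏ i ∈ Finset.Ioc 0 m, x i) * β < 1 - q * A l := by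
          simp only [hβ_def] at *
          nlinarith
        rw [hprodb, hproda] at hprodmaj
        linarith
  have := key d hd le_rfl
  rw [hIccIoc]
  calc ∑ i ∈ Finset.Ioc 0 d, x i ≤ ∑ i ∈ Finset.Ioc 0 d, a i := this
    _ = ∑ i ∈ Finset.Ioc 0 d, (1:ℝ)/(1 + (u i : ℝ)) := rfl
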